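/- arXiv:1811.01385 — 5 statements merged into one kernel-verified Lean document; each statement's English description precedes it below -/
import Mathlib

section
/- Let ω be a double weight on (0,1) (i.e. ω̂(r) ≤ C ω̂((1+r)/2)) and define ω_*(r) = ∫_r^1 s ω(s) log(s/r) ds for r ∈ (0,1]. Then there exist constants c₁, c₂ > 0 and r₀ ∈ (0,1) such that c₁ (1-r) ω̂(r) ≤ ω_*(r) ≤ c₂ (1-r) ω̂(r) for all r ∈ (r₀, 1). -/
open Real MeasureTheory Set

/-- For a double weight `ω`, `ω_*(r) ≍ (1-r) ω̂(r)` as `r → 1`. -/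
theorem stmt_3 (ω : ℝ → ℝ)
    (hint : IntegrableOn ω (Ioo (0:ℝ) 1))
    (hpos : ∀ r ∈ Ioo (0:ℝ) 1, 0 < ω r)
    (C : ℝ) (hC : 0 < C)
    (hdbl : ∀ r ∈ Ioo (0:ℝ) 1,
      (∫ s in Ioo r 1, ω s) ≤ C * ∫ s in Ioo ((1 + r) / 2) 1, ω s) :
    ∃ c₁ c₂ r₀ : ℝ, 0 < c₁ ∧ 0 < c₂ ∧ r₀ ∈ Ioo (0:ℝ) 1 ∧
      ∀ r ∈ Ioo r₀ 1,
        c₁ * (1 - r) * (∫ s in Ioo r 1, ω s) ≤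
            (∫ s in Ioo r 1, s * ω s * Real.log (s / r)) ∧
        (∫ s in Ioo r 1, s * ω s * Real.log (s / r)) ≤
            c₂ * (1 - r) * (∫ s in Ioo r 1, ω s) := by
  refine ⟨1/(4*C), 2, 1/2, by positivity, by norm_num, ⟨by norm_num, by norm_num⟩, ?_⟩
  intro r hr
  obtain ⟨hr1, hr2⟩ := hr
  have hr0 : (0:ℝ) < r := by linarith
  have hrI : r ∈ Ioo (0:ℝ) 1 := ⟨hr0, hr2⟩
  set m := (1+r)/2 with hm
  have hrm : r < m := by rw [hm]; linarith
  have hm1 : m < 1 := by rw [hm]; linarith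
  have hm0 : (0:ℝ) < m := by linarith
  have hωint_r : IntegrableOn ω (Ioo r 1) :=
    hint.mono_set (Ioo_subset_Ioo (le_of_lt hr0) le_rfl)
  have hωint_m : IntegrableOn ω (Ioo m 1) :=
    hint.mono_set (Ioo_subset_Ioo (le_of_lt hm0) le_rfl)
  -- pointwise facts
  have hlog_nn : ∀ s ∈ Ioo r 1, 0 ≤ Real.log (s / r) := by
    intro s hs
    apply Real.log_nonneg
    rw [le_div_iff₀ hr0]; linarith [hs.1]
  have hlog_le : ∀ s ∈ Ioo r 1, Real.log (s / r) ≤ 2 * (1 - r) := by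
    intro s hs
    have hs0 : 0 < s := lt_trans hr0 hs.1
    have h1 : Real.log (s / r) ≤ s / r - 1 := Real.log_le_sub_one_of_pos (div_pos hs0 hr0)
    have h2 : s / r - 1 ≤ 2 * (1 - r) := by
      rw [div_sub_one (ne_of_gt hr0), div_le_iff₀ hr0]
      nlinarith [hs.2]
    linarith
  have hf_nonneg : ∀ s ∈ Ioo r 1, 0 ≤ s * ω s * Real.log (s / r) := by
    intro s hs
    have hω := (hpos s ⟨lt_trans hr0 hs.1, hs.2⟩).le
    have hl := hlog_nn s hs
    have hs0 : 0 < s := lt_trans hr0 hs.1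
    exact mul_nonneg (mul_nonneg hs0.le hω) hl
  have hbound : ∀ s ∈ Ioo r 1, s * ω s * Real.log (s / r) ≤ 2 * (1 - r) * ω s := by
    intro s hs
    have hω := (hpos s ⟨lt_trans hr0 hs.1, hs.2⟩).le
    have hl1 := hlog_nn s hs
    have hl2 := hlog_le s hs
    have hs0 : 0 < s := lt_trans hr0 hs.1
    have h1 : s * (ω s * Real.log (s / r)) ≤ 1 * (ω s * Real.log (s / r)) :=
      mul_le_mul_of_nonneg_right hs.2.le (mul_nonneg hω hl1)
    have h2 : ω s * Real.log (s / r) ≤ ω s * (2 * (1 - r)) :=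
      mul_le_mul_of_nonneg_left hl2 hω
    nlinarith
  -- integrability of the integrand
  have hg : IntegrableOn (fun s => 2 * (1 - r) * ω s) (Ioo r 1) := hωint_r.const_mul _
  have hmeas : AEStronglyMeasurable (fun s => s * ω s * Real.log (s / r))
      (volume.restrict (Ioo r 1)) := by
    exact (aestronglyMeasurable_id.mul hωint_r.aestronglyMeasurable).mul
      ((Real.measurable_log.comp (measurable_id.div_const r)).aestronglyMeasurable)
  have hf_int : IntegrableOn (fun s => s * ω s * Real.log (s / r)) (Ioo r 1) := by
    apply Integrable.mono' hg hmeas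
    filter_upwards [ae_restrict_mem measurableSet_Ioo] with s hs
    rw [Real.norm_eq_abs, abs_of_nonneg (hf_nonneg s hs)]
    exact hbound s hs
  have hωm_nn : 0 ≤ ∫ s in Ioo m 1, ω s := by
    apply setIntegral_nonneg measurableSet_Ioo
    intro s hs
    exact (hpos s ⟨lt_trans hm0 hs.1, hs.2⟩).le
  constructor
  · -- lower bound
    have hsub : Ioo m 1 ⊆ Ioo r 1 := Ioo_subset_Ioo hrm.le le_rfl
    have step2 : (∫ s in Ioo m 1, s * ω s * Real.log (s / r)) ≤
        ∫ s in Ioo r 1, s * ω s * Real.log (s / r) := by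
      apply setIntegral_mono_set hf_int
      · filter_upwards [ae_restrict_mem measurableSet_Ioo] with s hs using hf_nonneg s hs
      · exact HasSubset.Subset.eventuallyLE hsub
    have step1 : (∫ s in Ioo m 1, (1 - r) / 4 * ω s) ≤
        ∫ s in Ioo m 1, s * ω s * Real.log (s / r) := by
      apply setIntegral_mono_on (hωint_m.const_mul _)
        (hf_int.mono_set hsub) measurableSet_Ioo
      intro s hs
      have hsI : s ∈ Ioo r 1 := hsub hs
      have hω := (hpos s ⟨lt_trans hr0 hsI.1, hsI.2⟩).le
      have hlogm : Real.log (m / r) ≥ 1 - r / m := by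
        have h := Real.log_le_sub_one_of_pos (show (0:ℝ) < r / m by positivity)
        have : Real.log (r / m) = - Real.log (m / r) := by
          rw [← Real.log_inv]; congr 1; field_simp
        linarith [this ▸ h]
      have hmono : Real.log (m / r) ≤ Real.log (s / r) :=
        Real.log_le_log (by positivity) ((div_le_div_iff_of_pos_right hr0).mpr hs.1.le)
      have hkey : Real.log (s / r) ≥ (1 - r) / 2 := by
        have h1 : 1 - r / m = (m - r) / m := by field_simp
        have h2 : (m - r) / m ≥ (1 - r) / 2 := by
          rw [ge_iff_le, div_le_div_iff₀ (by norm_num) hm0, hm]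
          nlinarith
        linarith
      have hs12 : (1:ℝ)/2 < s := by
        have : (1:ℝ)/2 < m := by rw [hm]; linarith
        linarith [hs.1]
      have h3 : (1/2) * ((1 - r)/2) ≤ s * Real.log (s / r) := by
        nlinarith [hlog_nn s hsI]
      have h4 := mul_le_mul_of_nonneg_right h3 hω
      nlinarith
    have hstep1' : (1 - r) / 4 * ∫ s in Ioo m 1, ω s ≤
        ∫ s in Ioo m 1, s * ω s * Real.log (s / r) := by
      rw [← integral_const_mul]; exact step1
    have hdblr := hdbl r hrI
    have h14 : 1/(4*C) * (1 - r) * (∫ s in Ioo r 1, ω s) ≤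
        (1 - r) / 4 * ∫ s in Ioo m 1, ω s := by
      rw [← hm] at hdblr
      rw [div_mul_eq_mul_div, one_mul, div_mul_eq_mul_div, div_le_iff₀ (by positivity)]
      nlinarith [mul_le_mul_of_nonneg_left hdblr (show (0:ℝ) ≤ 1 - r by linarith)]
    linarith
  · -- upper bound
    have h1 : (∫ s in Ioo r 1, s * ω s * Real.log (s / r)) ≤
        ∫ s in Ioo r 1, 2 * (1 - r) * ω s :=
      setIntegral_mono_on hf_int hg measurableSet_Ioo hbound
    rw [integral_const_mul] at h1
    linarith
end

section
/- Let φ : 𝔻 → 𝔻 be holomorphic on the open unit disk. Then φ extends to (or equals) a finite Blaschke product if and only if |φ(w)| → 1 as |w| → 1⁻. -/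
open Complex Set Metric Filter Finset
open scoped Topology

noncomputable def bf (a z : ℂ) : ℂ := (a - z) / (1 - (starRingEnd ℂ) a * z)

lemma bf_sq_identity (a z : ℂ) :
    ‖1 - (starRingEnd ℂ) a * z‖^2 - ‖a - z‖^2 = (1 - ‖a‖^2) * (1 - ‖z‖^2) := by
  simp only [Complex.sq_norm, Complex.normSq_apply, Complex.sub_re,
    Complex.sub_im, Complex.mul_re, Complex.mul_im, Complex.one_re, Complex.one_im,
    Complex.conj_re, Complex.conj_im]
  ring

lemma nsq_lt_one {a : ℂ} (h : ‖a‖ < 1) : ‖a‖^2 < 1 := by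
  nlinarith [norm_nonneg a]

lemma den_lb {a z : ℂ} (ha : ‖a‖ < 1) (hz : ‖z‖ < 1) :
    0 < 1 - ‖a‖ * ‖z‖ ∧ 1 - ‖a‖ * ‖z‖ ≤ ‖1 - (starRingEnd ℂ) a * z‖ := by
  constructor
  · nlinarith [norm_nonneg a, norm_nonneg z]
  · calc 1 - ‖a‖ * ‖z‖ = ‖(1:ℂ)‖ - ‖(starRingEnd ℂ) a * z‖ := by
          simp [norm_mul]
    _ ≤ ‖1 - (starRingEnd ℂ) a * z‖ := norm_sub_norm_le _ _

lemma den_ne {a z : ℂ} (ha : ‖a‖ < 1) (hz : ‖z‖ < 1) :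
    1 - (starRingEnd ℂ) a * z ≠ 0 := by
  obtain ⟨h1, h2⟩ := den_lb ha hz
  intro h
  rw [h, norm_zero] at h2
  linarith

lemma num_nonneg {a z : ℂ} (ha : ‖a‖ < 1) (hz : ‖z‖ < 1) :
    0 ≤ (1 - ‖a‖^2) * (1 - ‖z‖^2) :=
  mul_nonneg (by linarith [nsq_lt_one ha]) (by linarith [nsq_lt_one hz])

lemma bf_le_one {a z : ℂ} (ha : ‖a‖ < 1) (hz : ‖z‖ < 1) : ‖bf a z‖ ≤ 1 := by
  obtain ⟨h1, h2⟩ := den_lb ha hz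
  have hd : 0 < ‖1 - (starRingEnd ℂ) a * z‖ := lt_of_lt_of_le h1 h2
  rw [bf, norm_div, div_le_one hd]
  nlinarith [bf_sq_identity a z, num_nonneg ha hz, norm_nonneg (a - z),
    norm_nonneg (1 - (starRingEnd ℂ) a * z)]

lemma bf_sq_eq {a z : ℂ} (ha : ‖a‖ < 1) (hz : ‖z‖ < 1) :
    ‖bf a z‖^2 = 1 - (1 - ‖a‖^2) * (1 - ‖z‖^2) / ‖1 - (starRingEnd ℂ) a * z‖^2 := by
  obtain ⟨h1, h2⟩ := den_lb ha hz
  have hd : 0 < ‖1 - (starRingEnd ℂ) a * z‖ := lt_of_lt_of_le h1 h2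
  have hdne : ‖1 - (starRingEnd ℂ) a * z‖^2 ≠ 0 := by positivity
  rw [bf, norm_div, div_pow, eq_sub_iff_add_eq, ← add_div, div_eq_one_iff_eq hdne]
  linarith [bf_sq_identity a z]

lemma bf_lb {a z : ℂ} (ha : ‖a‖ < 1) (hz : ‖z‖ < 1) :
    1 - (1 - ‖a‖^2) * (1 - ‖z‖^2) / (1 - ‖a‖)^2 ≤ ‖bf a z‖ := by
  obtain ⟨h1, h2⟩ := den_lb ha hz
  have hd : 0 < ‖1 - (starRingEnd ℂ) a * z‖ := lt_of_lt_of_le h1 h2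
  have hda : 1 - ‖a‖ ≤ ‖1 - (starRingEnd ℂ) a * z‖ := by
    nlinarith [norm_nonneg a, norm_nonneg z]
  have ha1 : 0 < 1 - ‖a‖ := by linarith
  have hsq : 1 - (1 - ‖a‖^2) * (1 - ‖z‖^2) / (1 - ‖a‖)^2 ≤ ‖bf a z‖^2 := by
    rw [bf_sq_eq ha hz]
    have : (1 - ‖a‖^2) * (1 - ‖z‖^2) / ‖1 - (starRingEnd ℂ) a * z‖^2
        ≤ (1 - ‖a‖^2) * (1 - ‖z‖^2) / (1 - ‖a‖)^2 := by
      apply div_le_div_of_nonneg_left (num_nonneg ha hz) (by positivity)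
      nlinarith
    linarith
  have hle1 := bf_le_one ha hz
  nlinarith [norm_nonneg (bf a z)]

lemma div_step {ψ : ℂ → ℂ} (hψ : DifferentiableOn ℂ ψ (ball (0:ℂ) 1))
    (hb : ∀ z ∈ ball (0:ℂ) 1, ‖ψ z‖ ≤ 1) {a : ℂ} (ha : ‖a‖ < 1) (h0 : ψ a = 0) :
    ∃ ψ' : ℂ → ℂ, DifferentiableOn ℂ ψ' (ball (0:ℂ) 1) ∧ (∀ z ∈ ball (0:ℂ) 1, ‖ψ' z‖ ≤ 1) ∧
      ∀ z ∈ ball (0:ℂ) 1, ψ z = bf a z * ψ' z := by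
  have haD : a ∈ ball (0:ℂ) 1 := by simpa using ha
  set ψ' : ℂ → ℂ := fun z => dslope ψ a z * ((starRingEnd ℂ) a * z - 1) with hψ'def
  have hdiff : DifferentiableOn ℂ ψ' (ball (0:ℂ) 1) := by
    apply DifferentiableOn.mul
    · exact (differentiableOn_dslope (isOpen_ball.mem_nhds haD)).mpr hψ
    · exact ((differentiableOn_const _).mul differentiableOn_id).sub (differentiableOn_const 1)
  have heq : ∀ z ∈ ball (0:ℂ) 1, ψ z = bf a z * ψ' z := by
    intro z hz
    have hz1 : ‖z‖ < 1 := by simpa using hz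
    rcases eq_or_ne z a with rfl | hne
    · simp [h0, bf, ψ']
    · have : dslope ψ a z = (z - a)⁻¹ • (ψ z - ψ a) := by
        rw [dslope_of_ne _ hne]; rfl
      rw [hψ'def]
      simp only [this, h0, sub_zero, smul_eq_mul, bf]
      have hzane : z - a ≠ 0 := sub_ne_zero.mpr hne
      have hden' : 1 - z * (starRingEnd ℂ) a ≠ 0 := by rw [mul_comm]; exact den_ne ha hz1
      field_simp [den_ne ha hz1, hden']
      ring
  refine ⟨ψ', hdiff, ?_, heq⟩
  intro z hzD
  have hz1 : ‖z‖ < 1 := by simpa using hzD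
  set L : ℝ → ℝ := fun s => 1 / (1 - (1 - ‖a‖^2) * (1 - s^2) / (1 - ‖a‖)^2) with hL
  have hLtendsto : Tendsto L (𝓝[<] (1:ℝ)) (𝓝 1) := by
    have hc : ContinuousAt L 1 := by
      apply ContinuousAt.div continuousAt_const
      · fun_prop
      · norm_num
    have : L 1 = 1 := by norm_num [hL]
    simpa [this] using hc.continuousWithinAt.tendsto
  have hev : ∀ᶠ s in 𝓝[<] (1:ℝ), ‖ψ' z‖ ≤ L s := by
    have h1 : ∀ᶠ s in 𝓝[<] (1:ℝ), s ∈ Ioo (max ‖z‖ ‖a‖) 1 :=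
      Ioo_mem_nhdsLT_of_mem ⟨max_lt hz1 ha, le_refl 1⟩
    have h2 : ∀ᶠ s in 𝓝[<] (1:ℝ),
        0 < 1 - (1 - ‖a‖^2) * (1 - s^2) / (1 - ‖a‖)^2 := by
      have hcont : ContinuousAt (fun s : ℝ => 1 - (1 - ‖a‖^2) * (1 - s^2) / (1 - ‖a‖)^2) 1 := by
        fun_prop
      have hval : (fun s : ℝ => 1 - (1 - ‖a‖^2) * (1 - s^2) / (1 - ‖a‖)^2) 1 = 1 := by norm_num
      have h2' := hcont.continuousWithinAt.tendsto (s := Iio (1:ℝ))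
      norm_num at h2'
      exact h2'.eventually (eventually_gt_nhds one_pos)
    filter_upwards [h1, h2] with s hs hβ
    obtain ⟨hslb, hs1⟩ := hs
    have hsz : ‖z‖ < s := lt_of_le_of_lt (le_max_left _ _) hslb
    have hsa : ‖a‖ < s := lt_of_le_of_lt (le_max_right _ _) hslb
    have hs0 : 0 < s := lt_of_le_of_lt (norm_nonneg z) hsz
    set β := 1 - (1 - ‖a‖^2) * (1 - s^2) / (1 - ‖a‖)^2 with hβdef
    -- max principle on ball 0 s
    have hsub : closure (ball (0:ℂ) s) ⊆ ball (0:ℂ) 1 := by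
      rw [closure_ball (0:ℂ) (ne_of_gt hs0)]
      exact closedBall_subset_ball hs1
    have hdc : DiffContOnCl ℂ ψ' (ball (0:ℂ) s) :=
      ⟨hdiff.mono (ball_subset_ball hs1.le), (hdiff.continuousOn).mono hsub⟩
    have hfr : ∀ w ∈ frontier (ball (0:ℂ) s), ‖ψ' w‖ ≤ L s := by
      rw [frontier_ball (0:ℂ) (ne_of_gt hs0)]
      intro w hw
      have hwn : ‖w‖ = s := by simpa using hw
      have hw1 : ‖w‖ < 1 := by rw [hwn]; exact hs1
      have hwD : w ∈ ball (0:ℂ) 1 := by simpa using hw1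
      have hblb : β ≤ ‖bf a w‖ := by
        have := bf_lb ha hw1
        rw [hwn] at this
        exact this
      have hψw : ‖ψ w‖ = ‖bf a w‖ * ‖ψ' w‖ := by rw [heq w hwD, norm_mul]
      rw [hL, le_div_iff₀ hβ]
      calc ‖ψ' w‖ * β ≤ ‖ψ' w‖ * ‖bf a w‖ :=
            mul_le_mul_of_nonneg_left hblb (norm_nonneg _)
        _ = ‖ψ w‖ := by rw [hψw, mul_comm]
        _ ≤ 1 := hb w hwD
    exact norm_le_of_forall_mem_frontier_norm_le isBounded_ball hdc hfr
      (subset_closure (by simpa using hsz))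
  exact ge_of_tendsto hLtendsto hev

-- upper bound for |bf a z₀|² when ‖a‖ ≤ t₀ < ‖z₀‖
lemma bf_ub {a z₀ : ℂ} {t₀ : ℝ} (ht₀ : 0 < t₀) (ha : ‖a‖ ≤ t₀) (ht1 : t₀ < 1)
    (hz₀ : ‖z₀‖ < 1) :
    ‖bf a z₀‖^2 ≤ 1 - (1 - t₀^2) * (1 - ‖z₀‖^2) / 4 := by
  have ha1 : ‖a‖ < 1 := lt_of_le_of_lt ha ht1
  rw [bf_sq_eq ha1 hz₀]
  have hd : ‖1 - (starRingEnd ℂ) a * z₀‖ ≤ 2 := by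
    calc ‖1 - (starRingEnd ℂ) a * z₀‖ ≤ ‖(1:ℂ)‖ + ‖(starRingEnd ℂ) a * z₀‖ := norm_sub_le _ _
      _ ≤ 1 + 1 := by
          rw [norm_one, norm_mul, RCLike.norm_conj]
          nlinarith [norm_nonneg a, norm_nonneg z₀]
      _ = 2 := by norm_num
  obtain ⟨hp, hlb⟩ := den_lb ha1 hz₀
  have hd0 : 0 < ‖1 - (starRingEnd ℂ) a * z₀‖ := lt_of_lt_of_le hp hlb
  have hz2 : 0 ≤ 1 - ‖z₀‖^2 := by linarith [nsq_lt_one hz₀]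
  have h1 : (1 - t₀^2) * (1 - ‖z₀‖^2) ≤ (1 - ‖a‖^2) * (1 - ‖z₀‖^2) := by
    apply mul_le_mul_of_nonneg_right _ hz2
    nlinarith [norm_nonneg a]
  have h2 : (1 - ‖a‖^2) * (1 - ‖z₀‖^2) / 4 ≤
      (1 - ‖a‖^2) * (1 - ‖z₀‖^2) / ‖1 - (starRingEnd ℂ) a * z₀‖^2 := by
    apply div_le_div_of_nonneg_left (num_nonneg ha1 hz₀) (by positivity)
    nlinarith
  have h3 : (1 - t₀^2) * (1 - ‖z₀‖^2) / 4 ≤ (1 - ‖a‖^2) * (1 - ‖z₀‖^2) / 4 := by linarith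
  linarith

lemma factor_ind {t₀ : ℝ} (ht₀0 : 0 < t₀) (ht₀1 : t₀ < 1) {z₀ : ℂ}
    (hz₀1 : ‖z₀‖ < 1) (hz₀t : t₀ < ‖z₀‖) :
    ∀ (k : ℕ) (ψ : ℂ → ℂ), DifferentiableOn ℂ ψ (ball (0:ℂ) 1) →
      (∀ z ∈ ball (0:ℂ) 1, ‖ψ z‖ ≤ 1) →
      (∀ z ∈ ball (0:ℂ) 1, t₀ < ‖z‖ → ψ z ≠ 0) →
      (1 - (1 - t₀^2) * (1 - ‖z₀‖^2) / 4) ^ k < ‖ψ z₀‖^2 →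
      ∃ (n : ℕ) (a : Fin n → ℂ) (g : ℂ → ℂ), (∀ i, ‖a i‖ ≤ t₀) ∧
        DifferentiableOn ℂ g (ball (0:ℂ) 1) ∧ (∀ z ∈ ball (0:ℂ) 1, g z ≠ 0) ∧
        (∀ z ∈ ball (0:ℂ) 1, ‖g z‖ ≤ 1) ∧
        ∀ z ∈ ball (0:ℂ) 1, ψ z = g z * ∏ i, bf (a i) z := by
  set c2 : ℝ := 1 - (1 - t₀^2) * (1 - ‖z₀‖^2) / 4 with hc2def
  have hz₀D : z₀ ∈ ball (0:ℂ) 1 := by simpa using hz₀1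
  have hc2pos : 0 < c2 := by
    have ht2 : t₀^2 < 1 := by nlinarith
    have hz2 : ‖z₀‖^2 < 1 := nsq_lt_one hz₀1
    rw [hc2def]
    nlinarith [sq_nonneg t₀, sq_nonneg ‖z₀‖]
  intro k
  induction k with
  | zero =>
    intro ψ hψ hb hnz hlt
    exfalso
    have h1 : ‖ψ z₀‖ ≤ 1 := hb z₀ hz₀D
    have : ‖ψ z₀‖^2 ≤ 1 := by nlinarith [norm_nonneg (ψ z₀)]
    simp only [pow_zero] at hlt
    linarith
  | succ k ih =>
    intro ψ hψ hb hnz hlt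
    by_cases hzero : ∃ a ∈ ball (0:ℂ) 1, ψ a = 0
    · obtain ⟨a, haD, ha0⟩ := hzero
      have ha1 : ‖a‖ < 1 := by simpa using haD
      have hat : ‖a‖ ≤ t₀ := by
        by_contra h
        push_neg at h
        exact hnz a haD h ha0
      obtain ⟨ψ', hψ'd, hψ'b, hψ'eq⟩ := div_step hψ hb ha1 ha0
      have hnz' : ∀ z ∈ ball (0:ℂ) 1, t₀ < ‖z‖ → ψ' z ≠ 0 := by
        intro z hz hzt h
        exact hnz z hz hzt (by rw [hψ'eq z hz, h, mul_zero])
      have hlt' : c2 ^ k < ‖ψ' z₀‖^2 := by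
        have hub := bf_ub ht₀0 hat ht₀1 hz₀1
        have heqn : ‖ψ z₀‖^2 = ‖bf a z₀‖^2 * ‖ψ' z₀‖^2 := by
          rw [hψ'eq z₀ hz₀D, norm_mul, mul_pow]
        have h1 : ‖ψ z₀‖^2 ≤ c2 * ‖ψ' z₀‖^2 := by
          rw [heqn]
          exact mul_le_mul_of_nonneg_right hub (by positivity)
        rw [pow_succ] at hlt
        have : c2 ^ k * c2 < c2 * ‖ψ' z₀‖^2 := lt_of_lt_of_le hlt h1
        exact lt_of_mul_lt_mul_right (by linarith : c2 ^ k * c2 < ‖ψ' z₀‖^2 * c2) hc2pos.le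
      obtain ⟨n, a', g, ha', hgd, hgnz, hgb, hgeq⟩ := ih ψ' hψ'd hψ'b hnz' hlt'
      refine ⟨n + 1, Fin.cons a a', g, ?_, hgd, hgnz, hgb, ?_⟩
      · intro i
        refine Fin.cases ?_ ?_ i
        · simpa using hat
        · intro j; simpa using ha' j
      · intro z hz
        rw [hψ'eq z hz, hgeq z hz, Fin.prod_univ_succ]
        simp only [Fin.cons_zero, Fin.cons_succ]
        ring
    · push_neg at hzero
      refine ⟨0, Fin.elim0, ψ, fun i => i.elim0, hψ, hzero, hb, ?_⟩
      intro z hz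
      simp

theorem forward_dir (φ : ℂ → ℂ) (l : ℂ) (m n : ℕ) (a : Fin n → ℂ)
    (hl : ‖l‖ = 1) (ha : ∀ k, a k ∈ ball (0:ℂ) 1 ∧ a k ≠ 0)
    (heq : ∀ z ∈ ball (0:ℂ) 1,
      φ z = l * z ^ m * ∏ k, (a k - z) / (1 - (starRingEnd ℂ) (a k) * z)) :
    ∀ r ∈ Ioo (0:ℝ) 1, ∃ t ∈ Ioo (0:ℝ) 1,
      ∀ z : ℂ, ‖z‖ < 1 → t < ‖z‖ → r < ‖φ z‖ := by
  rintro r ⟨hr0, hr1⟩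
  have ha1 : ∀ k, ‖a k‖ < 1 := fun k => by simpa using (ha k).1
  set L : Fin n → ℝ → ℝ :=
    fun k s => 1 - (1 - ‖a k‖^2) * (1 - s^2) / (1 - ‖a k‖)^2 with hLdef
  set M : ℝ → ℝ := fun s => s^m * ∏ k, L k s with hMdef
  have hMc : Continuous M := by
    apply Continuous.mul (continuous_pow m)
    exact continuous_finset_prod _ (fun k _ => by fun_prop)
  have hM1 : M 1 = 1 := by simp [hMdef, hLdef]
  have htd : Tendsto M (𝓝[<] (1:ℝ)) (𝓝 1) := by
    have := (hMc.tendsto 1).mono_left (nhdsWithin_le_nhds (s := Iio (1:ℝ)))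
    rwa [hM1] at this
  have h1 : ∀ᶠ s in 𝓝[<] (1:ℝ), r < M s := htd (Ioi_mem_nhds hr1)
  have h2 : ∀ᶠ s in 𝓝[<] (1:ℝ), ∀ k, 0 ≤ L k s := by
    refine eventually_all.mpr fun k => ?_
    have hc : Tendsto (L k) (𝓝[<] (1:ℝ)) (𝓝 1) := by
      have hcont : Continuous (L k) := by fun_prop
      have hv : L k 1 = 1 := by simp [hLdef]
      have := (hcont.tendsto 1).mono_left (nhdsWithin_le_nhds (s := Iio (1:ℝ)))
      rwa [hv] at this
    exact hc.eventually (eventually_ge_nhds one_pos)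
  have h3 : ∀ᶠ s in 𝓝[<] (1:ℝ), s ∈ Ioo (0:ℝ) 1 :=
    Ioo_mem_nhdsLT_of_mem ⟨zero_lt_one, le_refl 1⟩
  obtain ⟨t', ht'1, hsub⟩ := mem_nhdsLT_iff_exists_Ioo_subset.mp
    ((h1.and (h2.and h3)) : _ ∈ 𝓝[<] (1:ℝ))
  refine ⟨max t' (1/2), ⟨lt_of_lt_of_le (by norm_num) (le_max_right _ _),
    max_lt ht'1 (by norm_num)⟩, ?_⟩
  intro z hz1 htz
  have hzIoo : ‖z‖ ∈ Ioo t' 1 := ⟨lt_of_le_of_lt (le_max_left _ _) htz, hz1⟩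
  obtain ⟨hgood1, hgood2, hgood3⟩ := hsub hzIoo
  have hzD : z ∈ ball (0:ℂ) 1 := by simpa using hz1
  have hφn : ‖φ z‖ = ‖z‖^m * ∏ k, ‖bf (a k) z‖ := by
    rw [heq z hzD]
    simp only [norm_mul, norm_pow, norm_prod, hl, one_mul, bf]
  have hprodle : ∏ k, L k ‖z‖ ≤ ∏ k, ‖bf (a k) z‖ :=
    Finset.prod_le_prod (fun k _ => hgood2 k) (fun k _ => bf_lb (ha1 k) hz1)
  have : M ‖z‖ ≤ ‖φ z‖ := by
    rw [hφn, hMdef]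
    exact mul_le_mul_of_nonneg_left hprodle (by positivity)
  exact lt_of_lt_of_le hgood1 this

theorem reverse_dir (φ : ℂ → ℂ)
    (hφ : DifferentiableOn ℂ φ (ball (0:ℂ) 1))
    (hmap : MapsTo φ (ball (0:ℂ) 1) (ball (0:ℂ) 1))
    (hbnd : ∀ r ∈ Ioo (0:ℝ) 1, ∃ t ∈ Ioo (0:ℝ) 1,
        ∀ z : ℂ, ‖z‖ < 1 → t < ‖z‖ → r < ‖φ z‖) :
    ∃ (l : ℂ) (m n : ℕ) (a : Fin n → ℂ), ‖l‖ = 1 ∧ (∀ k, a k ∈ ball (0:ℂ) 1 ∧ a k ≠ 0) ∧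
        ∀ z ∈ ball (0:ℂ) 1,
          φ z = l * z ^ m * ∏ k, (a k - z) / (1 - (starRingEnd ℂ) (a k) * z) := by
  classical
  have hb : ∀ z ∈ ball (0:ℂ) 1, ‖φ z‖ ≤ 1 := fun z hz => le_of_lt (by simpa using hmap hz)
  obtain ⟨t₀, ht₀, hhalf⟩ := hbnd (1/2) ⟨by norm_num, by norm_num⟩
  obtain ⟨ht₀0, ht₀1⟩ := ht₀
  set z₀ : ℂ := (((t₀ + 1)/2 : ℝ) : ℂ) with hz₀def
  have hz₀n : ‖z₀‖ = (t₀ + 1)/2 := by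
    rw [hz₀def, Complex.norm_real, Real.norm_eq_abs, abs_of_pos (by linarith)]
  have hz₀1 : ‖z₀‖ < 1 := by rw [hz₀n]; linarith
  have hz₀t : t₀ < ‖z₀‖ := by rw [hz₀n]; linarith
  have hφz₀ : 1/2 < ‖φ z₀‖ := hhalf z₀ hz₀1 hz₀t
  have hnz : ∀ z ∈ ball (0:ℂ) 1, t₀ < ‖z‖ → φ z ≠ 0 := by
    intro z hz hzt h
    have := hhalf z (by simpa using hz) hzt
    rw [h, norm_zero] at this
    linarith
  set c2 : ℝ := 1 - (1 - t₀^2) * (1 - ‖z₀‖^2) / 4 with hc2def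
  have hc2lt1 : c2 < 1 := by
    rw [hc2def]
    have hz2 : ‖z₀‖^2 < 1 := nsq_lt_one hz₀1
    nlinarith [mul_pos (show (0:ℝ) < 1 - t₀^2 by nlinarith)
      (show (0:ℝ) < 1 - ‖z₀‖^2 by nlinarith)]
  obtain ⟨K, hK⟩ := exists_pow_lt_of_lt_one (show (0:ℝ) < 1/4 by norm_num) hc2lt1
  have hlt : c2 ^ K < ‖φ z₀‖^2 := by nlinarith
  obtain ⟨n, a, g, hat, hgd, hgnz, hgb, hgeq⟩ :=
    factor_ind ht₀0 ht₀1 hz₀1 hz₀t K φ hφ hb hnz hlt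
  have haD : ∀ i, ‖a i‖ < 1 := fun i => lt_of_le_of_lt (hat i) ht₀1
  -- ‖φ z‖ ≤ ‖g z‖
  have hgelb : ∀ z ∈ ball (0:ℂ) 1, ‖φ z‖ ≤ ‖g z‖ := by
    intro z hz
    have hz1 : ‖z‖ < 1 := by simpa using hz
    rw [hgeq z hz, norm_mul, norm_prod]
    have hprod : ∏ i, ‖bf (a i) z‖ ≤ 1 :=
      Finset.prod_le_one (fun i _ => norm_nonneg _) (fun i _ => bf_le_one (haD i) hz1)
    calc ‖g z‖ * ∏ i, ‖bf (a i) z‖ ≤ ‖g z‖ * 1 :=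
          mul_le_mul_of_nonneg_left hprod (norm_nonneg _)
      _ = ‖g z‖ := mul_one _
  -- ‖g z‖ = 1 on the ball
  have hg1 : ∀ z ∈ ball (0:ℂ) 1, ‖g z‖ = 1 := by
    intro z hz
    have hz1 : ‖z‖ < 1 := by simpa using hz
    have hgpos : 0 < ‖g z‖ := norm_pos_iff.mpr (hgnz z hz)
    refine le_antisymm (hgb z hz) ?_
    have hinvle : ∀ r ∈ Ioo (0:ℝ) 1, ‖(g z)⁻¹‖ ≤ 1/r := by
      rintro r ⟨hr0, hr1⟩
      obtain ⟨t, ⟨ht0, ht1⟩, hht⟩ := hbnd r ⟨hr0, hr1⟩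
      set s : ℝ := (max t ‖z‖ + 1)/2 with hsdef
      have hts : t < s := by
        have := le_max_left t ‖z‖
        rw [hsdef]; have := max_lt ht1 hz1; linarith [le_max_left t ‖z‖]
      have hzs : ‖z‖ < s := by
        rw [hsdef]; have := max_lt ht1 hz1; linarith [le_max_right t ‖z‖]
      have hs1 : s < 1 := by rw [hsdef]; have := max_lt ht1 hz1; linarith
      have hs0 : 0 < s := lt_trans ht0 hts
      have hsub : closure (ball (0:ℂ) s) ⊆ ball (0:ℂ) 1 := by
        rw [closure_ball (0:ℂ) (ne_of_gt hs0)]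
        exact closedBall_subset_ball hs1
      have hdiffinv : DifferentiableOn ℂ (fun w => (g w)⁻¹) (ball (0:ℂ) 1) :=
        DifferentiableOn.inv hgd hgnz
      have hdc : DiffContOnCl ℂ (fun w => (g w)⁻¹) (ball (0:ℂ) s) :=
        ⟨hdiffinv.mono (ball_subset_ball hs1.le), (hdiffinv.continuousOn).mono hsub⟩
      have hfr : ∀ w ∈ frontier (ball (0:ℂ) s), ‖(g w)⁻¹‖ ≤ 1/r := by
        rw [frontier_ball (0:ℂ) (ne_of_gt hs0)]
        intro w hw
        have hwn : ‖w‖ = s := by simpa using hw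
        have hw1 : ‖w‖ < 1 := by rw [hwn]; exact hs1
        have hwD : w ∈ ball (0:ℂ) 1 := by simpa using hw1
        have hrg : r < ‖g w‖ :=
          lt_of_lt_of_le (hht w hw1 (by rw [hwn]; exact hts)) (hgelb w hwD)
        rw [norm_inv, one_div]
        exact inv_anti₀ hr0 hrg.le
      exact norm_le_of_forall_mem_frontier_norm_le isBounded_ball hdc hfr
        (subset_closure (by simpa using hzs))
    have hev : ∀ᶠ r in 𝓝[<] (1:ℝ), ‖(g z)⁻¹‖ ≤ 1/r := by
      filter_upwards [Ioo_mem_nhdsLT_of_mem (⟨zero_lt_one, le_refl 1⟩ : (1:ℝ) ∈ Set.Ioc 0 1)]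
        with r hr
      exact hinvle r hr
    have htd : Tendsto (fun r : ℝ => 1/r) (𝓝[<] (1:ℝ)) (𝓝 1) := by
      have hc : ContinuousAt (fun r : ℝ => 1/r) 1 := by
        apply ContinuousAt.div continuousAt_const continuousAt_id; norm_num
      simpa using hc.continuousWithinAt.tendsto
    have hinv1 : ‖(g z)⁻¹‖ ≤ 1 := ge_of_tendsto htd hev
    rw [norm_inv] at hinv1
    have hmc : ‖g z‖⁻¹ * ‖g z‖ = 1 := inv_mul_cancel₀ (ne_of_gt hgpos)
    nlinarith [mul_le_mul_of_nonneg_right hinv1 hgpos.le]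
  -- g is constant
  have h0D : (0:ℂ) ∈ ball (0:ℂ) 1 := by simp
  have hmax : IsMaxOn (norm ∘ g) (ball (0:ℂ) 1) 0 := by
    intro x hx
    simp only [Function.comp_apply, mem_setOf_eq, hg1 x hx, hg1 0 h0D]
    exact le_refl 1
  have hconst := Complex.eqOn_of_isPreconnected_of_isMaxOn_norm
    (convex_ball (0:ℂ) 1).isPreconnected isOpen_ball hgd h0D hmax
  -- split the product
  set s1 : Finset (Fin n) := Finset.univ.filter (fun i => a i ≠ 0) with hs1def
  set m : ℕ := (Finset.univ.filter (fun i => a i = 0)).card with hmdef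
  set e := s1.orderIsoOfFin rfl with hedef
  refine ⟨g 0 * (-1)^m, m, s1.card, fun k => a ((e k) : Fin n), ?_, ?_, ?_⟩
  · rw [norm_mul, norm_pow, norm_neg, norm_one, one_pow, mul_one, hg1 0 h0D]
  · intro k
    have hmem := Finset.mem_filter.mp (e k).2
    exact ⟨by simpa using haD ((e k) : Fin n), hmem.2⟩
  · intro z hz
    have hsplit : ∏ i, bf (a i) z =
        (∏ i ∈ Finset.univ.filter (fun i => a i = 0), bf (a i) z) *
        (∏ i ∈ Finset.univ.filter (fun i => ¬ a i = 0), bf (a i) z) :=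
      (Finset.prod_filter_mul_prod_filter_not Finset.univ _ _).symm
    have h1 : ∏ i ∈ Finset.univ.filter (fun i => a i = 0), bf (a i) z = (-1)^m * z^m := by
      have hc : ∀ i ∈ Finset.univ.filter (fun i => a i = 0), bf (a i) z = -z := by
        intro i hi
        rw [(Finset.mem_filter.mp hi).2, bf]
        simp
      rw [Finset.prod_congr rfl hc, Finset.prod_const, ← hmdef, neg_pow]
    have h2 : ∏ i ∈ Finset.univ.filter (fun i => ¬ a i = 0), bf (a i) z =
        ∏ k, bf (a ((e k) : Fin n)) z := by
      rw [← Finset.prod_coe_sort s1 (fun i => bf (a i) z)]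
      exact (Equiv.prod_comp e.toEquiv (fun i : s1 => bf (a (i : Fin n)) z)).symm
    have := hgeq z hz
    rw [hconst hz] at this
    rw [this, hsplit, h1, h2]
    simp only [Function.const_apply, bf]
    ring


/-- A holomorphic self-map `φ` of the unit disk is a finite Blaschke product iff
`|φ(w)| → 1` as `|w| → 1⁻`. -/
theorem stmt_5 (φ : ℂ → ℂ)
    (hφ : DifferentiableOn ℂ φ (ball (0:ℂ) 1))
    (hmap : MapsTo φ (ball (0:ℂ) 1) (ball (0:ℂ) 1)) :
    (∃ (l : ℂ) (m n : ℕ) (a : Fin n → ℂ), ‖l‖ = 1 ∧ (∀ k, a k ∈ ball (0:ℂ) 1 ∧ a k ≠ 0) ∧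
        ∀ z ∈ ball (0:ℂ) 1,
          φ z = l * z ^ m * ∏ k, (a k - z) / (1 - (starRingEnd ℂ) (a k) * z)) ↔
      (∀ r ∈ Ioo (0:ℝ) 1, ∃ t ∈ Ioo (0:ℝ) 1,
        ∀ z : ℂ, ‖z‖ < 1 → t < ‖z‖ → r < ‖φ z‖) := by
  constructor
  · rintro ⟨l, m, n, a, hl, ha, heq⟩
    exact forward_dir φ l m n a hl ha heq
  · intro hbnd
    exact reverse_dir φ hφ hmap hbnd
end

section
/- There exists C₁ > 0 such that for all 0 ≤ r ≤ t < 1, log(e(1-rt)/((1-t)(1+r))) · log(e/(1-r)) ≥ C₁ · log(e/(1-t)). -/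
open Real

/-- There is `C₁ > 0` such that for all `0 ≤ r ≤ t < 1`,
`log(e(1-rt)/((1-t)(1+r))) · log(e/(1-r)) ≥ C₁ · log(e/(1-t))`. -/
theorem stmt_9 :
    ∃ C₁ : ℝ, 0 < C₁ ∧ ∀ r t : ℝ, 0 ≤ r → r ≤ t → t < 1 →
      C₁ * Real.log (Real.exp 1 / (1 - t)) ≤
        Real.log (Real.exp 1 * (1 - r * t) / ((1 - t) * (1 + r))) *
          Real.log (Real.exp 1 / (1 - r)) := by
  refine ⟨1/20, by norm_num, fun r t hr hrt ht => ?_⟩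
  have h1t : (0:ℝ) < 1 - t := by linarith
  have h1r : (0:ℝ) < 1 - r := by linarith
  have h1rt : (0:ℝ) < 1 - r * t := by nlinarith
  have h1pr : (0:ℝ) < 1 + r := by linarith
  have hA : Real.log (Real.exp 1 * (1 - r * t) / ((1 - t) * (1 + r)))
      = 1 + Real.log (1 - r*t) - Real.log (1-t) - Real.log (1+r) := by
    rw [Real.log_div (by positivity) (by positivity),
      Real.log_mul (by positivity) (by positivity),
      Real.log_mul (by positivity) (by positivity), Real.log_exp]
    ring
  have hBt : Real.log (Real.exp 1 / (1 - t)) = 1 - Real.log (1-t) := by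
    rw [Real.log_div (by positivity) (by positivity), Real.log_exp]
  have hBr : Real.log (Real.exp 1 / (1 - r)) = 1 - Real.log (1-r) := by
    rw [Real.log_div (by positivity) (by positivity), Real.log_exp]
  rw [hA, hBt, hBr]
  have ha0 : Real.log (1-t) ≤ 0 := Real.log_nonpos (by linarith) (by linarith)
  have hb0 : Real.log (1-r) ≤ 0 := Real.log_nonpos (by linarith) (by linarith)
  have hba : Real.log (1-t) ≤ Real.log (1-r) := Real.log_le_log h1t (by linarith)
  have h2 : Real.log (1-t) ≤ Real.log (1 - r*t) := Real.log_le_log h1t (by nlinarith)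
  have h3 : Real.log (1-r) ≤ Real.log (1 - r*t) := Real.log_le_log h1r (by nlinarith)
  have h4 : Real.log (1+r) ≤ Real.log 2 := Real.log_le_log h1pr (by linarith)
  have hl2 : Real.log 2 < 0.6931471808 := Real.log_two_lt_d9
  set a : ℝ := -Real.log (1-t) with ha
  set b : ℝ := -Real.log (1-r) with hb
  -- A := 1 + log(1-rt) + a - log(1+r); bounds:
  have hA1 : 1 - Real.log 2 ≤ 1 + Real.log (1 - r*t) - Real.log (1-t) - Real.log (1+r) := by
    linarith
  have hA2 : 1 - Real.log 2 + a - b ≤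
      1 + Real.log (1 - r*t) - Real.log (1-t) - Real.log (1+r) := by
    simp only [ha, hb]; linarith
  rcases le_or_gt b ((1 + a)/4) with hc | hc
  · -- A ≥ 3(1+a)/4 - log 2, B ≥ 1
    have hB1 : (1:ℝ) ≤ 1 - Real.log (1-r) := by linarith
    nlinarith [mul_le_mul_of_nonneg_right hA2 (by linarith : (0:ℝ) ≤ 1 - Real.log (1-r)),
      mul_le_mul_of_nonneg_left hB1 (by linarith : (0:ℝ) ≤ 1 - Real.log 2 + a - b)]
  · -- A ≥ 1 - log 2, B = 1 + b ≥ 1 + (1+a)/4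
    nlinarith [mul_le_mul_of_nonneg_right hA1 (by linarith : (0:ℝ) ≤ 1 - Real.log (1-r)),
      mul_le_mul_of_nonneg_left (by linarith : 1 + (1+a)/4 ≤ 1 - Real.log (1-r))
        (by linarith : (0:ℝ) ≤ 1 - Real.log 2)]
end

section
/- Let 0 < α ≤ 1, β > 0 and ω(r) = exp(-β (log(e/(1-r)))^α) on [0,1). Then there exists C > 0 such that for all 0 ≤ r ≤ t < 1, ω(φ_t(r)) · ω(r) ≤ C ω(t), where φ_t(r) = (t-r)/(1-tr). -/
open Real

lemma rpow_subadd (x y α : ℝ) (hx : 0 ≤ x) (hy : 0 ≤ y) (h0 : 0 ≤ α) (h1 : α ≤ 1) :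
    (x + y) ^ α ≤ x ^ α + y ^ α := by
  have h := NNReal.rpow_add_le_add_rpow x.toNNReal y.toNNReal h0 h1
  rw [← Real.toNNReal_add hx hy] at h
  have h2 := NNReal.coe_le_coe.mpr h
  rw [NNReal.coe_add, NNReal.coe_rpow, NNReal.coe_rpow, NNReal.coe_rpow,
    Real.coe_toNNReal _ hx, Real.coe_toNNReal _ hy,
    Real.coe_toNNReal _ (add_nonneg hx hy)] at h2
  exact h2

lemma log_ge_one (x : ℝ) (hx0 : 0 ≤ x) (hx1 : x < 1) :
    1 ≤ Real.log (Real.exp 1 / (1 - x)) := by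
  have h1 : (0:ℝ) < 1 - x := by linarith
  rw [Real.log_div (Real.exp_ne_zero 1) (ne_of_gt h1), Real.log_exp]
  have : Real.log (1 - x) ≤ 0 := Real.log_nonpos (by linarith) (by linarith)
  linarith

/-- For `0 < α ≤ 1`, `β > 0` and `ω r = exp(-β (log(e/(1-r)))^α)`, there is `C > 0` with
`ω(φ_t(r)) ω(r) ≤ C ω(t)` for `0 ≤ r ≤ t < 1`, where `φ_t(r) = (t-r)/(1-tr)`. -/
theorem stmt_11 (α β : ℝ) (hα0 : 0 < α) (hα1 : α ≤ 1) (hβ : 0 < β)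
    (ω : ℝ → ℝ) (hω : ∀ r : ℝ, ω r = Real.exp (-β * (Real.log (Real.exp 1 / (1 - r))) ^ α)) :
    ∃ C : ℝ, 0 < C ∧ ∀ r t : ℝ, 0 ≤ r → r ≤ t → t < 1 →
      ω ((t - r) / (1 - t * r)) * ω r ≤ C * ω t := by
  refine ⟨1, one_pos, fun r t hr hrt ht => ?_⟩
  have hr1 : r < 1 := lt_of_le_of_lt hrt ht
  have h1t : (0:ℝ) < 1 - t := by linarith
  have h1r : (0:ℝ) < 1 - r := by linarith
  have htr : 0 < 1 - t * r := by nlinarith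
  set φ : ℝ := (t - r) / (1 - t * r) with hφdef
  have hφ0 : 0 ≤ φ := div_nonneg (by linarith) htr.le
  have h1φ : 1 - φ = (1 - t) * (1 + r) / (1 - t * r) := by
    rw [hφdef, eq_div_iff htr.ne', sub_mul, div_mul_cancel₀ _ htr.ne']
    ring
  have h1φpos : (0:ℝ) < 1 - φ := by
    rw [h1φ]
    exact div_pos (mul_pos h1t (by linarith)) htr
  have hφ1 : φ < 1 := by linarith
  set a := Real.log (Real.exp 1 / (1 - φ)) with ha
  set b := Real.log (Real.exp 1 / (1 - r)) with hb
  set c := Real.log (Real.exp 1 / (1 - t)) with hc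
  have ha1 : 1 ≤ a := log_ge_one φ hφ0 hφ1
  have hb1 : 1 ≤ b := log_ge_one r hr hr1
  have hc1 : 1 ≤ c := log_ge_one t (le_trans hr hrt) ht
  have he : (2:ℝ) ≤ Real.exp 1 := by
    have := Real.add_one_le_exp 1
    linarith
  have haeq : a = 1 - Real.log (1 - φ) := by
    rw [ha, Real.log_div (Real.exp_ne_zero 1) h1φpos.ne', Real.log_exp]
  have hbeq : b = 1 - Real.log (1 - r) := by
    rw [hb, Real.log_div (Real.exp_ne_zero 1) h1r.ne', Real.log_exp]
  have hceq : c = 1 - Real.log (1 - t) := by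
    rw [hc, Real.log_div (Real.exp_ne_zero 1) h1t.ne', Real.log_exp]
  have hkey : c ≤ a + b := by
    have hprod : (1 - φ) * (1 - r) ≤ Real.exp 1 * (1 - t) := by
      rw [h1φ, div_mul_eq_mul_div, div_le_iff₀ htr]
      have htr2 : t * r ≤ r := by nlinarith
      have h2 : (1 + r) * (1 - r) ≤ Real.exp 1 * (1 - t * r) := by
        nlinarith [sq_nonneg (1 - r), mul_le_mul_of_nonneg_right he htr.le]
      nlinarith [mul_le_mul_of_nonneg_left h2 h1t.le]
    have hlog := Real.log_le_log (mul_pos h1φpos h1r) hprod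
    rw [Real.log_mul h1φpos.ne' h1r.ne',
      Real.log_mul (Real.exp_ne_zero 1) h1t.ne', Real.log_exp] at hlog
    rw [haeq, hbeq, hceq]
    linarith
  have hrpow : c ^ α ≤ a ^ α + b ^ α := by
    calc c ^ α ≤ (a + b) ^ α :=
          Real.rpow_le_rpow (by linarith) hkey hα0.le
      _ ≤ a ^ α + b ^ α := rpow_subadd a b α (by linarith) (by linarith) hα0.le hα1
  rw [hω, hω, hω, ← Real.exp_add, one_mul]
  apply Real.exp_le_exp.mpr
  nlinarith [mul_le_mul_of_nonneg_left hrpow hβ.le]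
end

section
/- Let ω(r) = (1-r)^α (log(e/(1-r)))^β with α > -1, β ≤ 0, and define ω̂(r) = ∫_r^1 ω(s)ds and φ_t(r) = (t-r)/(1-tr). Then there is a constant C such that ω̂(φ_t(r)) ω̂(r) ≤ C ω̂(t) for all 0 ≤ r ≤ t < 1. -/
open Real MeasureTheory Set

private lemma st18_int_eq {α : ℝ} (hα : -1 < α) {x : ℝ} (hx : x ≤ 1) :
    ∫ s in Ioo x 1, (1 - s) ^ α = (1 - x) ^ (α + 1) / (α + 1) := by
  rw [← MeasureTheory.integral_Ioc_eq_integral_Ioo, ← intervalIntegral.integral_of_le hx]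
  have h := intervalIntegral.integral_comp_sub_left (a := x) (b := 1)
    (fun u => u ^ α) 1
  simp only [sub_self] at h
  rw [h, integral_rpow (Or.inl hα), Real.zero_rpow (by linarith : α + 1 ≠ 0)]
  ring

private lemma st18_int_integrable {α : ℝ} (hα : -1 < α) {x : ℝ} (hx : x ≤ 1) :
    IntegrableOn (fun s => (1 - s) ^ α) (Ioo x 1) := by
  have h := (intervalIntegral.intervalIntegrable_rpow' hα (a := 0) (b := 1 - x)).comp_sub_left 1
  simp only [sub_sub_cancel, sub_zero] at h
  rw [intervalIntegrable_iff, uIoc_comm, uIoc_of_le hx] at h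
  exact h.mono_set Ioo_subset_Ioc_self

private lemma st18_contOn {α β x : ℝ} (h0 : 0 ≤ x) :
    ContinuousOn (fun s => (1 - s) ^ α * (1 - Real.log (1 - s)) ^ β) (Ioo x 1) := by
  intro s hs
  have h1 : (0:ℝ) < 1 - s := by linarith [hs.2]
  have hlog : Real.log (1 - s) ≤ 0 := Real.log_nonpos (by linarith) (by linarith [hs.1])
  have hL : (0:ℝ) < 1 - Real.log (1 - s) := by linarith
  apply ContinuousAt.continuousWithinAt
  have c1 : ContinuousAt (fun s : ℝ => 1 - s) s := by fun_prop
  have c2 : ContinuousAt (fun s : ℝ => (1 - s) ^ α) s :=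
    c1.rpow_const (Or.inl h1.ne')
  have clog : ContinuousAt (fun s : ℝ => 1 - Real.log (1 - s)) s :=
    continuousAt_const.sub ((Real.continuousAt_log h1.ne').comp c1)
  have c3 : ContinuousAt (fun s : ℝ => (1 - Real.log (1 - s)) ^ β) s :=
    clog.rpow_const (Or.inl hL.ne')
  exact c2.mul c3

private lemma st18_F_nonneg {α β s : ℝ} (h0 : 0 ≤ s) (h1 : s < 1) :
    0 ≤ (1 - s) ^ α * (1 - Real.log (1 - s)) ^ β := by
  have hlog : Real.log (1 - s) ≤ 0 := Real.log_nonpos (by linarith) (by linarith)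
  exact mul_nonneg (Real.rpow_nonneg (by linarith) _) (Real.rpow_nonneg (by linarith) _)

private lemma st18_F_integrable {α β x : ℝ} (hα : -1 < α) (hβ : β ≤ 0)
    (h0 : 0 ≤ x) (h1 : x < 1) :
    IntegrableOn (fun s => (1 - s) ^ α * (1 - Real.log (1 - s)) ^ β) (Ioo x 1) := by
  apply Integrable.mono' (st18_int_integrable hα h1.le)
    ((st18_contOn h0).aestronglyMeasurable measurableSet_Ioo)
  refine (ae_restrict_iff' measurableSet_Ioo).2 (ae_of_all _ fun s hs => ?_)
  have hs0 : (0:ℝ) ≤ s := le_trans h0 hs.1.le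
  have h1s : (0:ℝ) < 1 - s := by linarith [hs.2]
  have hlog : Real.log (1 - s) ≤ 0 := Real.log_nonpos (by linarith) (by linarith)
  rw [Real.norm_eq_abs, abs_of_nonneg (st18_F_nonneg hs0 hs.2)]
  calc (1 - s) ^ α * (1 - Real.log (1 - s)) ^ β
      ≤ (1 - s) ^ α * 1 := by
        apply mul_le_mul_of_nonneg_left _ (Real.rpow_nonneg h1s.le _)
        exact Real.rpow_le_one_of_one_le_of_nonpos (by linarith) hβ
    _ = (1 - s) ^ α := mul_one _

private lemma st18_upper {α β x : ℝ} (hα : -1 < α) (hβ : β ≤ 0) (h0 : 0 ≤ x) (h1 : x < 1) :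
    ∫ s in Ioo x 1, (1 - s) ^ α * (1 - Real.log (1 - s)) ^ β
      ≤ (1 - Real.log (1 - x)) ^ β * ((1 - x) ^ (α + 1) / (α + 1)) := by
  have hLx : (0:ℝ) < 1 - Real.log (1 - x) := by
    have := Real.log_nonpos (by linarith : (0:ℝ) ≤ 1 - x) (by linarith)
    linarith
  have key : ∫ s in Ioo x 1, (1 - s) ^ α * (1 - Real.log (1 - s)) ^ β
      ≤ ∫ s in Ioo x 1, (1 - Real.log (1 - x)) ^ β * (1 - s) ^ α := by
    apply setIntegral_mono_on (st18_F_integrable hα hβ h0 h1)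
      ((st18_int_integrable hα h1.le).const_mul _) measurableSet_Ioo
    intro s hs
    have h1s : (0:ℝ) < 1 - s := by linarith [hs.2]
    have hle : Real.log (1 - s) ≤ Real.log (1 - x) :=
      Real.log_le_log h1s (by linarith [hs.1])
    rw [mul_comm]
    apply mul_le_mul_of_nonneg_right _ (Real.rpow_nonneg h1s.le _)
    exact Real.rpow_le_rpow_of_nonpos hLx (by linarith) hβ
  rwa [MeasureTheory.integral_const_mul, st18_int_eq hα h1.le] at key

private lemma st18_lower {α β x : ℝ} (hα : -1 < α) (hβ : β ≤ 0) (h0 : 0 ≤ x) (h1 : x < 1) :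
    min 1 ((2:ℝ) ^ (-α)) * (1 + Real.log 2) ^ β / 2
        * ((1 - x) ^ (α + 1) * (1 - Real.log (1 - x)) ^ β)
      ≤ ∫ s in Ioo x 1, (1 - s) ^ α * (1 - Real.log (1 - s)) ^ β := by
  set m : ℝ := (1 + x) / 2 with hm
  have hxm : x < m := by rw [hm]; linarith
  have hm1 : m < 1 := by rw [hm]; linarith
  have h1x : (0:ℝ) < 1 - x := by linarith
  have hlogx : Real.log (1 - x) ≤ 0 := Real.log_nonpos (by linarith) (by linarith)
  have hLx : (0:ℝ) < 1 - Real.log (1 - x) := by linarith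
  have hlog2 : (0:ℝ) ≤ Real.log 2 := Real.log_nonneg one_le_two
  set k : ℝ := min 1 ((2:ℝ) ^ (-α)) * (1 - x) ^ α
      * ((1 + Real.log 2) * (1 - Real.log (1 - x))) ^ β with hk
  have step2 : ∫ s in Ioo x m, k ≤ ∫ s in Ioo x m, (1 - s) ^ α * (1 - Real.log (1 - s)) ^ β := by
    apply setIntegral_mono_on
      (integrableOn_const (C := k) measure_Ioo_lt_top.ne)
      ((st18_F_integrable hα hβ h0 h1).mono_set (Ioo_subset_Ioo le_rfl hm1.le))
      measurableSet_Ioo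
    intro s hs
    have h1s : (0:ℝ) < 1 - s := by linarith [hs.2, hm1]
    have h1sx : 1 - s ≤ 1 - x := by linarith [hs.1]
    have h1sm : (1 - x) / 2 ≤ 1 - s := by rw [hm] at hs; linarith [hs.2]
    have hA : min 1 ((2:ℝ) ^ (-α)) * (1 - x) ^ α ≤ (1 - s) ^ α := by
      rcases le_or_gt 0 α with hpos | hneg
      · calc min 1 ((2:ℝ) ^ (-α)) * (1 - x) ^ α ≤ (2:ℝ) ^ (-α) * (1 - x) ^ α :=
              mul_le_mul_of_nonneg_right (min_le_right _ _) (Real.rpow_nonneg h1x.le _)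
          _ = ((1 - x) / 2) ^ α := by
              rw [Real.div_rpow h1x.le (by norm_num : (0:ℝ) ≤ 2),
                Real.rpow_neg (by norm_num : (0:ℝ) ≤ 2)]
              ring
          _ ≤ (1 - s) ^ α := Real.rpow_le_rpow (by linarith) h1sm hpos
      · calc min 1 ((2:ℝ) ^ (-α)) * (1 - x) ^ α ≤ 1 * (1 - x) ^ α :=
              mul_le_mul_of_nonneg_right (min_le_left _ _) (Real.rpow_nonneg h1x.le _)
          _ = (1 - x) ^ α := one_mul _
          _ ≤ (1 - s) ^ α := Real.rpow_le_rpow_of_nonpos h1s h1sx hneg.le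
    have hlogs : Real.log (1 - s) ≤ 0 := Real.log_nonpos (by linarith) (by linarith)
    have hLs : (0:ℝ) < 1 - Real.log (1 - s) := by linarith
    have hB : ((1 + Real.log 2) * (1 - Real.log (1 - x))) ^ β ≤ (1 - Real.log (1 - s)) ^ β := by
      apply Real.rpow_le_rpow_of_nonpos hLs _ hβ
      have hlb : Real.log (1 - x) - Real.log 2 ≤ Real.log (1 - s) := by
        have : Real.log ((1 - x) / 2) ≤ Real.log (1 - s) :=
          Real.log_le_log (by linarith) h1sm
        rwa [Real.log_div h1x.ne' (by norm_num)] at this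
      nlinarith [mul_nonneg hlog2 (neg_nonneg.2 hlogx)]
    calc k ≤ (1 - s) ^ α * ((1 + Real.log 2) * (1 - Real.log (1 - x))) ^ β := by
          rw [hk]
          exact mul_le_mul_of_nonneg_right hA (Real.rpow_nonneg (by nlinarith) _)
      _ ≤ (1 - s) ^ α * (1 - Real.log (1 - s)) ^ β :=
          mul_le_mul_of_nonneg_left hB (Real.rpow_nonneg h1s.le _)
  have step1 : ∫ s in Ioo x m, (1 - s) ^ α * (1 - Real.log (1 - s)) ^ β
      ≤ ∫ s in Ioo x 1, (1 - s) ^ α * (1 - Real.log (1 - s)) ^ β := by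
    apply setIntegral_mono_set (st18_F_integrable hα hβ h0 h1)
    · exact (ae_restrict_iff' measurableSet_Ioo).2 (ae_of_all _ fun s hs =>
        st18_F_nonneg (le_trans h0 hs.1.le) hs.2)
    · exact (Ioo_subset_Ioo le_rfl hm1.le).eventuallyLE
  have hconst : ∫ s in Ioo x m, k = k * ((1 - x) / 2) := by
    rw [setIntegral_const, Real.volume_real_Ioo_of_le (by rw [hm]; linarith), smul_eq_mul]
    rw [hm]; ring_nf
  have halg : k * ((1 - x) / 2)
      = min 1 ((2:ℝ) ^ (-α)) * (1 + Real.log 2) ^ β / 2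
        * ((1 - x) ^ (α + 1) * (1 - Real.log (1 - x)) ^ β) := by
    rw [hk, Real.mul_rpow (by linarith) hLx.le, Real.rpow_add_one h1x.ne' α]
    ring
  calc min 1 ((2:ℝ) ^ (-α)) * (1 + Real.log 2) ^ β / 2
        * ((1 - x) ^ (α + 1) * (1 - Real.log (1 - x)) ^ β)
      = ∫ s in Ioo x m, k := by rw [hconst, halg]
    _ ≤ ∫ s in Ioo x m, (1 - s) ^ α * (1 - Real.log (1 - s)) ^ β := step2
    _ ≤ _ := step1

/-- For `ω(r) = (1-r)^α (log(e/(1-r)))^β` with `α > -1`, `β ≤ 0`, there is `C` with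
`ω̂(φ_t(r)) ω̂(r) ≤ C ω̂(t)` for all `0 ≤ r ≤ t < 1`, where `φ_t(r) = (t-r)/(1-tr)`. -/
theorem stmt_18 (α β : ℝ) (hα : -1 < α) (hβ : β ≤ 0)
    (ω : ℝ → ℝ)
    (hω : ∀ r : ℝ, ω r = (1 - r) ^ α * (Real.log (Real.exp 1 / (1 - r))) ^ β)
    (ωh : ℝ → ℝ) (hωh : ∀ r : ℝ, ωh r = ∫ s in Ioo r 1, ω s) :
    ∃ C : ℝ, 0 < C ∧ ∀ r t : ℝ, 0 ≤ r → r ≤ t → t < 1 →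
      ωh ((t - r) / (1 - t * r)) * ωh r ≤ C * ωh t := by
  have hα1 : (0:ℝ) < α + 1 := by linarith
  have hlog2 : (0:ℝ) ≤ Real.log 2 := Real.log_nonneg one_le_two
  have hlog2' : Real.log 2 ≤ 1 := by
    have := Real.log_le_sub_one_of_pos (by norm_num : (0:ℝ) < 2); linarith
  set c₁ : ℝ := min 1 ((2:ℝ) ^ (-α)) * (1 + Real.log 2) ^ β / 2 with hc₁
  have hc₁pos : 0 < c₁ := by
    rw [hc₁]
    apply div_pos (mul_pos (lt_min one_pos (Real.rpow_pos_of_pos two_pos _))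
      (Real.rpow_pos_of_pos (by linarith) _)) two_pos
  set C' : ℝ := (2:ℝ) ^ (α + 1) * (2:ℝ) ^ (-β) / (α + 1) ^ 2 with hC'
  have hC'pos : 0 < C' := by
    rw [hC']; positivity
  refine ⟨C' / c₁, div_pos hC'pos hc₁pos, ?_⟩
  intro r t hr hrt ht1
  -- rewrite ωh as integral of the normalized integrand
  have hωh' : ∀ x : ℝ, ωh x = ∫ s in Ioo x 1, (1 - s) ^ α * (1 - Real.log (1 - s)) ^ β := by
    intro x
    rw [hωh]
    apply setIntegral_congr_fun measurableSet_Ioo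
    intro s hs
    have h1s : (0:ℝ) < 1 - s := by linarith [hs.2]
    rw [hω, Real.log_div (Real.exp_ne_zero 1) h1s.ne', Real.log_exp]
  have up : ∀ x : ℝ, 0 ≤ x → x < 1 →
      ωh x ≤ (1 - Real.log (1 - x)) ^ β * ((1 - x) ^ (α + 1) / (α + 1)) := by
    intro x h0 h1; rw [hωh' x]; exact st18_upper hα hβ h0 h1
  have lo : ∀ x : ℝ, 0 ≤ x → x < 1 →
      c₁ * ((1 - x) ^ (α + 1) * (1 - Real.log (1 - x)) ^ β) ≤ ωh x := by
    intro x h0 h1; rw [hωh' x, hc₁]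
    exact st18_lower hα hβ h0 h1
  -- basic facts about r, t, φ
  have hr1 : r < 1 := lt_of_le_of_lt hrt ht1
  have ht0 : (0:ℝ) ≤ t := le_trans hr hrt
  have h1tr : (0:ℝ) < 1 - t * r := by nlinarith
  set φ : ℝ := (t - r) / (1 - t * r) with hφ
  have hφ0 : 0 ≤ φ := div_nonneg (by linarith) h1tr.le
  have hφ1 : φ < 1 := by rw [hφ, div_lt_one h1tr]; nlinarith
  have h1φpos : (0:ℝ) < 1 - φ := by linarith
  have h1rpos : (0:ℝ) < 1 - r := by linarith
  have h1tpos : (0:ℝ) < 1 - t := by linarith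
  have hlogφ : Real.log (1 - φ) ≤ 0 := Real.log_nonpos (by linarith) (by linarith)
  have hlogr : Real.log (1 - r) ≤ 0 := Real.log_nonpos (by linarith) (by linarith)
  have hlogt : Real.log (1 - t) ≤ 0 := Real.log_nonpos (by linarith) (by linarith)
  have hLφ : (1:ℝ) ≤ 1 - Real.log (1 - φ) := by linarith
  have hLr : (1:ℝ) ≤ 1 - Real.log (1 - r) := by linarith
  have hLt : (1:ℝ) ≤ 1 - Real.log (1 - t) := by linarith
  -- the two key inequalities
  have key1 : (1 - φ) * (1 - r) ≤ 2 * (1 - t) := by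
    have h1φ : 1 - φ = (1 - t) * (1 + r) / (1 - t * r) := by
      rw [hφ]; field_simp; ring
    rw [h1φ, div_mul_eq_mul_div, div_le_iff₀ h1tr]
    nlinarith [mul_nonneg h1tpos.le (sq_nonneg (1 - r)),
      mul_nonneg (mul_nonneg h1tpos.le hr) h1tpos.le]
  have keyL : (1 - Real.log (1 - t)) / 2
      ≤ (1 - Real.log (1 - φ)) * (1 - Real.log (1 - r)) := by
    have hlog : Real.log ((1 - φ) * (1 - r)) ≤ Real.log (2 * (1 - t)) :=
      Real.log_le_log (mul_pos h1φpos h1rpos) key1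
    rw [Real.log_mul h1φpos.ne' h1rpos.ne',
      Real.log_mul two_ne_zero h1tpos.ne'] at hlog
    nlinarith
  -- assemble
  have upφ := up φ hφ0 hφ1
  have upr := up r hr hr1
  have lot := lo t ht0 ht1
  have hωr0 : 0 ≤ ωh r := by
    refine le_trans ?_ (lo r hr hr1)
    have : (0:ℝ) ≤ (1 - r) ^ (α + 1) * (1 - Real.log (1 - r)) ^ β :=
      mul_nonneg (Real.rpow_nonneg h1rpos.le _) (Real.rpow_nonneg (by linarith) _)
    exact mul_nonneg hc₁pos.le this
  have hUφ0 : 0 ≤ (1 - Real.log (1 - φ)) ^ β * ((1 - φ) ^ (α + 1) / (α + 1)) :=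
    mul_nonneg (Real.rpow_nonneg (by linarith) _)
      (div_nonneg (Real.rpow_nonneg h1φpos.le _) hα1.le)
  have step1 : ωh φ * ωh r
      ≤ ((1 - Real.log (1 - φ)) ^ β * ((1 - φ) ^ (α + 1) / (α + 1)))
        * ((1 - Real.log (1 - r)) ^ β * ((1 - r) ^ (α + 1) / (α + 1))) :=
    mul_le_mul upφ upr hωr0 hUφ0
  have step2 : ((1 - Real.log (1 - φ)) ^ β * ((1 - φ) ^ (α + 1) / (α + 1)))
        * ((1 - Real.log (1 - r)) ^ β * ((1 - r) ^ (α + 1) / (α + 1)))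
      ≤ C' * ((1 - t) ^ (α + 1) * (1 - Real.log (1 - t)) ^ β) := by
    have ha : ((1 - φ) * (1 - r)) ^ (α + 1) ≤ (2:ℝ) ^ (α + 1) * (1 - t) ^ (α + 1) := by
      rw [← Real.mul_rpow two_pos.le h1tpos.le]
      exact Real.rpow_le_rpow (mul_nonneg h1φpos.le h1rpos.le) key1 hα1.le
    have hb : ((1 - Real.log (1 - φ)) * (1 - Real.log (1 - r))) ^ β
        ≤ (2:ℝ) ^ (-β) * (1 - Real.log (1 - t)) ^ β := by
      have heq : ((1 - Real.log (1 - t)) / 2) ^ β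
          = (2:ℝ) ^ (-β) * (1 - Real.log (1 - t)) ^ β := by
        rw [Real.div_rpow (by linarith) two_pos.le, Real.rpow_neg two_pos.le]
        ring
      calc ((1 - Real.log (1 - φ)) * (1 - Real.log (1 - r))) ^ β
          ≤ ((1 - Real.log (1 - t)) / 2) ^ β :=
            Real.rpow_le_rpow_of_nonpos (by linarith) keyL hβ
        _ = _ := heq
    have hmul := mul_le_mul ha hb
      (Real.rpow_nonneg (mul_nonneg (by linarith) (by linarith)) _)
      (by positivity)
    calc ((1 - Real.log (1 - φ)) ^ β * ((1 - φ) ^ (α + 1) / (α + 1)))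
          * ((1 - Real.log (1 - r)) ^ β * ((1 - r) ^ (α + 1) / (α + 1)))
        = ((1 - φ) * (1 - r)) ^ (α + 1)
          * (((1 - Real.log (1 - φ)) * (1 - Real.log (1 - r))) ^ β) * ((α + 1)⁻¹) ^ 2 := by
          rw [Real.mul_rpow h1φpos.le h1rpos.le,
            Real.mul_rpow (by linarith : (0:ℝ) ≤ 1 - Real.log (1 - φ))
              (by linarith : (0:ℝ) ≤ 1 - Real.log (1 - r))]
          ring
      _ ≤ ((2:ℝ) ^ (α + 1) * (1 - t) ^ (α + 1))
          * ((2:ℝ) ^ (-β) * (1 - Real.log (1 - t)) ^ β) * ((α + 1)⁻¹) ^ 2 :=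
          mul_le_mul_of_nonneg_right hmul (by positivity)
      _ = C' * ((1 - t) ^ (α + 1) * (1 - Real.log (1 - t)) ^ β) := by
          rw [hC']
          have hne : (α + 1) ≠ 0 := hα1.ne'
          field_simp
  have step3 : C' * ((1 - t) ^ (α + 1) * (1 - Real.log (1 - t)) ^ β)
      ≤ C' / c₁ * ωh t := by
    calc C' * ((1 - t) ^ (α + 1) * (1 - Real.log (1 - t)) ^ β)
        = C' / c₁ * (c₁ * ((1 - t) ^ (α + 1) * (1 - Real.log (1 - t)) ^ β)) := by
          field_simp
      _ ≤ C' / c₁ * ωh t :=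
          mul_le_mul_of_nonneg_left lot (div_nonneg hC'pos.le hc₁pos.le)
  exact le_trans step1 (le_trans step2 step3)
end
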